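/- If four random variables A, A', B, B' defined on a common probability space each take values in {−1,1}, then |𝔼(AB) + 𝔼(AB') + 𝔼(A'B) − 𝔼(A'B')| ≤ 2 (the CHSH inequality); moreover the pointwise bound AB + AB' + A'B − A'B' ∈ {−2, 2} holds for every sample point. -/

import Mathlib

open MeasureTheory

/-- The CHSH inequality: if `A, A', B, B'` are `{−1,1}`-valued random variables
on a common probability space, then
`|𝔼(AB) + 𝔼(AB') + 𝔼(A'B) − 𝔼(A'B')| ≤ 2`; moreover the pointwise bound
`AB + AB' + A'B − A'B' ∈ {−2, 2}` holds at every sample point. -/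
theorem chsh_inequality {Ω : Type} [MeasurableSpace Ω]
    (μ : Measure Ω) [IsProbabilityMeasure μ]
    (A A' B B' : Ω → ℝ)
    (hA : Measurable A) (hA' : Measurable A')
    (hB : Measurable B) (hB' : Measurable B')
    (hAv : ∀ ω, A ω = 1 ∨ A ω = -1) (hA'v : ∀ ω, A' ω = 1 ∨ A' ω = -1)
    (hBv : ∀ ω, B ω = 1 ∨ B ω = -1) (hB'v : ∀ ω, B' ω = 1 ∨ B' ω = -1) :
    |(∫ ω, A ω * B ω ∂μ) + (∫ ω, A ω * B' ω ∂μ)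
        + (∫ ω, A' ω * B ω ∂μ) - (∫ ω, A' ω * B' ω ∂μ)| ≤ 2 ∧
    ∀ ω, A ω * B ω + A ω * B' ω + A' ω * B ω - A' ω * B' ω = 2 ∨
      A ω * B ω + A ω * B' ω + A' ω * B ω - A' ω * B' ω = -2 := by
  have hpt : ∀ ω, A ω * B ω + A ω * B' ω + A' ω * B ω - A' ω * B' ω = 2 ∨
      A ω * B ω + A ω * B' ω + A' ω * B ω - A' ω * B' ω = -2 := by
    intro ω
    rcases hAv ω with h1 | h1 <;> rcases hA'v ω with h2 | h2 <;>
      rcases hBv ω with h3 | h3 <;> rcases hB'v ω with h4 | h4 <;>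
      rw [h1, h2, h3, h4] <;> norm_num
  refine ⟨?_, hpt⟩
  have hint : ∀ (X Y : Ω → ℝ), Measurable X → Measurable Y →
      (∀ ω, X ω = 1 ∨ X ω = -1) → (∀ ω, Y ω = 1 ∨ Y ω = -1) →
      Integrable (fun ω => X ω * Y ω) μ := by
    intro X Y hX hY hXv hYv
    apply Integrable.mono' (integrable_const 1) ((hX.mul hY).aestronglyMeasurable)
    filter_upwards with ω
    rcases hXv ω with h | h <;> rcases hYv ω with h' | h' <;> rw [Pi.mul_apply, h, h'] <;> norm_num
  have i1 := hint A B hA hB hAv hBv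
  have i2 := hint A B' hA hB' hAv hB'v
  have i3 := hint A' B hA' hB hA'v hBv
  have i4 := hint A' B' hA' hB' hA'v hB'v
  have key : ∫ ω, (A ω * B ω + A ω * B' ω + A' ω * B ω - A' ω * B' ω) ∂μ
      = (∫ ω, A ω * B ω ∂μ) + (∫ ω, A ω * B' ω ∂μ)
        + (∫ ω, A' ω * B ω ∂μ) - (∫ ω, A' ω * B' ω ∂μ) := by
    have i12 : Integrable (fun ω => A ω * B ω + A ω * B' ω) μ := i1.add i2
    have i123 : Integrable (fun ω => A ω * B ω + A ω * B' ω + A' ω * B ω) μ := i12.add i3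
    rw [integral_sub i123 i4, integral_add i12 i3, integral_add i1 i2]
  rw [← key]
  calc |∫ ω, (A ω * B ω + A ω * B' ω + A' ω * B ω - A' ω * B' ω) ∂μ|
      ≤ ∫ ω, |A ω * B ω + A ω * B' ω + A' ω * B ω - A' ω * B' ω| ∂μ :=
        (Real.norm_eq_abs _ ▸ norm_integral_le_integral_norm _).trans_eq
          (by simp [Real.norm_eq_abs])
    _ ≤ ∫ _ω, (2 : ℝ) ∂μ := by
        apply integral_mono_of_nonneg (Filter.Eventually.of_forall fun ω => abs_nonneg _)
          (integrable_const 2)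
        filter_upwards with ω
        rcases hpt ω with h | h <;> simp only [h] <;> norm_num
    _ = 2 := by simp
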